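/- Let σ satisfy: for every ε > 0 there is a finite ReLU combination g(x) = ∑_{k=1}^K ā_k ReLU(w̄_k x + b̄_k) with sup_{x∈ℝ}|σ(x) − g(x)| ≤ ε and ∑_k |ā_k|(|w̄_k|+|b̄_k|) ≤ γ. Let ℱ_Q be the class of G-averaged shallow networks f(x) = (1/(m|G|)) ∑_{i=1}^m a_i ∑_{g∈G} σ(w_i·gx + b_i) with path norm (1/m)∑_i (|a_i|(‖w_i‖₁+|b_i|+1))² ≤ Q². Then for any sample S of size M in Ω ⊆ {‖x‖_∞ ≤ 1} with ‖gx‖_∞ ≤ 1 for all g, R̂_S(ℱ_Q) ≤ 4 γ Q √(log(2d+2)/M). -/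

import Mathlib

open Finset Real

/-- Empirical Rademacher complexity on a sample `x : Fin M → Ω`. -/
noncomputable def empRad {Ω : Type*} {M : ℕ} (F : Set (Ω → ℝ)) (x : Fin M → Ω) : ℝ :=
  (M : ℝ)⁻¹ * ((2 ^ M : ℝ)⁻¹ * ∑ ξ : Fin M → Bool,
    sSup ((fun f : Ω → ℝ => ∑ i, (if ξ i then (1 : ℝ) else -1) * f (x i)) '' F))

/-- The class `ℱ_Q` of `G`-averaged shallow `σ`-networks with path norm
`(1/m)∑ (|a_i|(‖w_i‖₁+|b_i|+1))² ≤ Q²`. -/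
def sigmaClassG {d : ℕ} (G : Type*) [Group G] [Fintype G] [MulAction G (Fin d → ℝ)]
    (σ : ℝ → ℝ) (Q : ℝ) : Set ((Fin d → ℝ) → ℝ) :=
  {h | ∃ (m : ℕ) (_ : 1 ≤ m) (a : Fin m → ℝ) (w : Fin m → Fin d → ℝ) (b : Fin m → ℝ),
    ((m : ℝ)⁻¹ * ∑ i, (|a i| * ((∑ j, |w i j|) + |b i| + 1)) ^ 2) ≤ Q ^ 2 ∧
    h = fun z => (m : ℝ)⁻¹ * ∑ i, a i * ((Fintype.card G : ℝ)⁻¹ *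
      ∑ g : G, σ ((∑ j, w i j * (g • z) j) + b i))}

namespace RadAux

/-- sign of a Rademacher variable -/
def sg {M : ℕ} (ξ : Fin M → Bool) (i : Fin M) : ℝ := if ξ i then 1 else -1

lemma sg_def {M : ℕ} (ξ : Fin M → Bool) (i : Fin M) :
    (if ξ i then (1:ℝ) else -1) = sg ξ i := rfl

lemma abs_sg {M : ℕ} (ξ : Fin M → Bool) (i : Fin M) : |sg ξ i| = 1 := by
  unfold sg; split <;> simp

lemma bdd_range_sum {M : ℕ} {T : Type*} (v : T → Fin M → ℝ) (C : ℝ)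
    (hv : ∀ t i, |v t i| ≤ C) (ξ : Fin M → Bool) :
    BddAbove (Set.range fun t => ∑ i, sg ξ i * v t i) := by
  refine ⟨M * C, ?_⟩
  rintro _ ⟨t, rfl⟩
  calc ∑ i, sg ξ i * v t i ≤ ∑ _i : Fin M, C := by
        refine Finset.sum_le_sum fun i _ => ?_
        calc sg ξ i * v t i ≤ |sg ξ i * v t i| := le_abs_self _
          _ = |v t i| := by rw [abs_mul, abs_sg, one_mul]
          _ ≤ C := hv t i
    _ = M * C := by simp [mul_comm]

lemma core {T : Type*} [Nonempty T] (B H φH : T → ℝ)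
    (key : ∀ t t', φH t - φH t' ≤ |H t - H t'|)
    (h1 : BddAbove (Set.range fun t => B t + H t))
    (h2 : BddAbove (Set.range fun t => B t - H t)) :
    sSup (Set.range fun t => B t + φH t) + sSup (Set.range fun t => B t - φH t) ≤
      sSup (Set.range fun t => B t + H t) + sSup (Set.range fun t => B t - H t) := by
  set R := sSup (Set.range fun t => B t + H t) + sSup (Set.range fun t => B t - H t) with hR
  have main : ∀ t t', (B t + φH t) + (B t' - φH t') ≤ R := by
    intro t t'
    have hk := key t t'
    rcases le_total (H t') (H t) with hc | hc
    · have hd : φH t - φH t' ≤ H t - H t' := by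
        rwa [abs_of_nonneg (by linarith)] at hk
      have l1 : B t + H t ≤ sSup (Set.range fun t => B t + H t) := le_csSup h1 ⟨t, rfl⟩
      have l2 : B t' - H t' ≤ sSup (Set.range fun t => B t - H t) := le_csSup h2 ⟨t', rfl⟩
      rw [hR]; linarith
    · have hd : φH t - φH t' ≤ H t' - H t := by
        rw [abs_of_nonpos (by linarith), neg_sub] at hk; linarith
      have l1 : B t - H t ≤ sSup (Set.range fun t => B t - H t) := le_csSup h2 ⟨t, rfl⟩
      have l2 : B t' + H t' ≤ sSup (Set.range fun t => B t + H t) := le_csSup h1 ⟨t', rfl⟩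
      rw [hR]; linarith
  have step : ∀ t, sSup (Set.range fun t' => B t' - φH t') ≤ R - (B t + φH t) := by
    intro t
    refine csSup_le (Set.range_nonempty _) ?_
    rintro _ ⟨t', rfl⟩
    dsimp only
    linarith [main t t']
  have step2 : sSup (Set.range fun t => B t + φH t) ≤
      R - sSup (Set.range fun t' => B t' - φH t') := by
    refine csSup_le (Set.range_nonempty _) ?_
    rintro _ ⟨t, rfl⟩
    dsimp only
    linarith [step t]
  linarith


lemma flip_invol {M : ℕ} (j : Fin M) :
    Function.Involutive (fun ξ : Fin M → Bool => Function.update ξ j (!ξ j)) := by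
  intro ξ
  funext i
  rcases eq_or_ne i j with rfl | hij
  · simp
  · simp [Function.update_apply, hij]

lemma contr_step {M : ℕ} {T : Type*} [Nonempty T] (h : T → Fin M → ℝ)
    (hb : ∀ t i, |h t i| ≤ 1) (φ : ℝ → ℝ)
    (hφ : ∀ a b, |φ a - φ b| ≤ |a - b|) (hφb : ∀ t i, |φ (h t i)| ≤ 1)
    (A : Finset (Fin M)) (j : Fin M) (hj : j ∉ A) :
    ∑ ξ : Fin M → Bool,
        sSup (Set.range fun t => ∑ i, sg ξ i * (if i ∈ insert j A then φ (h t i) else h t i)) ≤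
      ∑ ξ : Fin M → Bool,
        sSup (Set.range fun t => ∑ i, sg ξ i * (if i ∈ A then φ (h t i) else h t i)) := by
  classical
  set flip : (Fin M → Bool) → (Fin M → Bool) := fun ξ => Function.update ξ j (!ξ j) with hflip
  have hinv : Function.Involutive flip := flip_invol j
  set F' : (Fin M → Bool) → ℝ := fun ξ =>
    sSup (Set.range fun t => ∑ i, sg ξ i * (if i ∈ insert j A then φ (h t i) else h t i)) with hF'
  set F : (Fin M → Bool) → ℝ := fun ξ =>
    sSup (Set.range fun t => ∑ i, sg ξ i * (if i ∈ A then φ (h t i) else h t i)) with hF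
  -- flip facts
  have sg_flip_ne : ∀ (ξ : Fin M → Bool) i, i ≠ j → sg (flip ξ) i = sg ξ i := by
    intro ξ i hij
    simp [sg, hflip, Function.update_apply, hij]
  have sg_flip_j : ∀ (ξ : Fin M → Bool), sg (flip ξ) j = -sg ξ j := by
    intro ξ
    rcases Bool.eq_false_or_eq_true (ξ j) with hb' | hb' <;> simp [sg, hflip, hb']
  -- pointwise pairing inequality
  have pointwise : ∀ ξ : Fin M → Bool, F' ξ + F' (flip ξ) ≤ F ξ + F (flip ξ) := by
    intro ξ
    set B : T → ℝ := fun t => ∑ i ∈ univ.erase j, sg ξ i * (if i ∈ A then φ (h t i) else h t i)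
      with hB
    set Hj : T → ℝ := fun t => h t j with hHj
    set P : T → ℝ := fun t => φ (h t j) with hP
    have key : ∀ t t', P t - P t' ≤ |Hj t - Hj t'| :=
      fun t t' => (le_abs_self _).trans (hφ _ _)
    -- rewriting of the four suprema
    have erase_eq : ∀ (ζ : Fin M → Bool), (∀ i, i ≠ j → sg ζ i = sg ξ i) → ∀ t,
        ∑ i ∈ univ.erase j, sg ζ i * (if i ∈ insert j A then φ (h t i) else h t i) = B t := by
      intro ζ hζ t
      refine Finset.sum_congr rfl fun i hi => ?_
      have hij : i ≠ j := Finset.ne_of_mem_erase hi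
      rw [hζ i hij]
      simp [Finset.mem_insert, hij]
    have erase_eqA : ∀ (ζ : Fin M → Bool), (∀ i, i ≠ j → sg ζ i = sg ξ i) → ∀ t,
        ∑ i ∈ univ.erase j, sg ζ i * (if i ∈ A then φ (h t i) else h t i) = B t := by
      intro ζ hζ t
      refine Finset.sum_congr rfl fun i hi => ?_
      rw [hζ i (Finset.ne_of_mem_erase hi)]
    have e1 : F' ξ = sSup (Set.range fun t => B t + sg ξ j * P t) := by
      rw [hF']
      refine congrArg sSup (congrArg Set.range (funext fun t => ?_))
      rw [← Finset.sum_erase_add univ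
        (fun i => sg ξ i * (if i ∈ insert j A then φ (h t i) else h t i)) (mem_univ j),
        erase_eq ξ (fun _ _ => rfl), if_pos (Finset.mem_insert_self j A)]
    have e2 : F' (flip ξ) = sSup (Set.range fun t => B t + (-sg ξ j) * P t) := by
      rw [hF']
      refine congrArg sSup (congrArg Set.range (funext fun t => ?_))
      rw [← Finset.sum_erase_add univ
        (fun i => sg (flip ξ) i * (if i ∈ insert j A then φ (h t i) else h t i)) (mem_univ j),
        erase_eq (flip ξ) (fun i hij => sg_flip_ne ξ i hij),
        if_pos (Finset.mem_insert_self j A), sg_flip_j]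
    have e3 : F ξ = sSup (Set.range fun t => B t + sg ξ j * Hj t) := by
      rw [hF]
      refine congrArg sSup (congrArg Set.range (funext fun t => ?_))
      rw [← Finset.sum_erase_add univ
        (fun i => sg ξ i * (if i ∈ A then φ (h t i) else h t i)) (mem_univ j),
        erase_eqA ξ (fun _ _ => rfl), if_neg hj]
    have e4 : F (flip ξ) = sSup (Set.range fun t => B t + (-sg ξ j) * Hj t) := by
      rw [hF]
      refine congrArg sSup (congrArg Set.range (funext fun t => ?_))
      rw [← Finset.sum_erase_add univ
        (fun i => sg (flip ξ) i * (if i ∈ A then φ (h t i) else h t i)) (mem_univ j),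
        erase_eqA (flip ξ) (fun i hij => sg_flip_ne ξ i hij), if_neg hj, sg_flip_j]
    -- boundedness of the two linear suprema
    have hBb : ∀ t, |B t| ≤ (M : ℝ) := by
      intro t
      calc |B t| ≤ ∑ i ∈ univ.erase j, |sg ξ i * (if i ∈ A then φ (h t i) else h t i)| :=
            Finset.abs_sum_le_sum_abs _ _
        _ ≤ ∑ _i ∈ univ.erase j, 1 := by
            refine Finset.sum_le_sum fun i _ => ?_
            rw [abs_mul, abs_sg, one_mul]
            split
            · exact hφb t i
            · exact hb t i
        _ ≤ (M : ℝ) := by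
            rw [Finset.sum_const, nsmul_eq_mul, mul_one]
            exact_mod_cast (Finset.card_le_card (Finset.subset_univ _)).trans
              (le_of_eq (Finset.card_univ.trans (Fintype.card_fin M)))
    have hbdd : ∀ (c : ℝ), |c| ≤ 1 → BddAbove (Set.range fun t => B t + c * Hj t) := by
      intro c hc
      refine ⟨(M : ℝ) + 1, ?_⟩
      rintro _ ⟨t, rfl⟩
      have h1 : c * Hj t ≤ 1 := by
        calc c * Hj t ≤ |c * Hj t| := le_abs_self _
          _ = |c| * |h t j| := by rw [abs_mul]
          _ ≤ 1 * 1 := mul_le_mul hc (hb t j) (abs_nonneg _) zero_le_one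
          _ = 1 := one_mul 1
      have h2 : B t ≤ (M : ℝ) := (le_abs_self _).trans (hBb t)
      dsimp only
      linarith
    have main2 : ∀ s : ℝ, s = 1 ∨ s = -1 →
        sSup (Set.range fun t => B t + s * P t) + sSup (Set.range fun t => B t + -s * P t) ≤
          sSup (Set.range fun t => B t + s * Hj t) +
            sSup (Set.range fun t => B t + -s * Hj t) := by
      intro s hs
      have bp : BddAbove (Set.range fun t => B t + Hj t) := by
        have hh := hbdd 1 (by norm_num)
        have e : (fun t => B t + (1:ℝ) * Hj t) = fun t => B t + Hj t := funext fun t => by ring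
        rwa [e] at hh
      have bm : BddAbove (Set.range fun t => B t - Hj t) := by
        have hh := hbdd (-1) (by norm_num)
        have e : (fun t => B t + (-1:ℝ) * Hj t) = fun t => B t - Hj t := funext fun t => by ring
        rwa [e] at hh
      have c := core B Hj P key bp bm
      rcases hs with rfl | rfl
      · have r1 : (fun t => B t + (1:ℝ) * P t) = fun t => B t + P t := funext fun t => by ring
        have r2 : (fun t => B t + -(1:ℝ) * P t) = fun t => B t - P t := funext fun t => by ring
        have r3 : (fun t => B t + (1:ℝ) * Hj t) = fun t => B t + Hj t := funext fun t => by ring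
        have r4 : (fun t => B t + -(1:ℝ) * Hj t) = fun t => B t - Hj t := funext fun t => by ring
        rw [r1, r2, r3, r4]
        exact c
      · have r1 : (fun t => B t + (-1:ℝ) * P t) = fun t => B t - P t := funext fun t => by ring
        have r2 : (fun t => B t + -(-1:ℝ) * P t) = fun t => B t + P t := funext fun t => by ring
        have r3 : (fun t => B t + (-1:ℝ) * Hj t) = fun t => B t - Hj t := funext fun t => by ring
        have r4 : (fun t => B t + -(-1:ℝ) * Hj t) = fun t => B t + Hj t := funext fun t => by ring
        rw [r1, r2, r3, r4]
        linarith [c]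
    rcases Bool.eq_false_or_eq_true (ξ j) with hξj | hξj
    · have hs : sg ξ j = 1 := by simp [sg, hξj]
      rw [e1, e2, e3, e4, hs]
      exact main2 1 (Or.inl rfl)
    · have hs : sg ξ j = -1 := by simp [sg, hξj]
      rw [e1, e2, e3, e4, hs]
      exact main2 (-1) (Or.inr rfl)
  -- pairing over the involution
  have sum_flip : ∀ (Fn : (Fin M → Bool) → ℝ),
      ∑ ξ : Fin M → Bool, Fn (flip ξ) = ∑ ξ : Fin M → Bool, Fn ξ :=
    fun Fn => Equiv.sum_comp (hinv.toPerm flip) Fn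
  have h2 : 2 * ∑ ξ : Fin M → Bool, F' ξ ≤ 2 * ∑ ξ : Fin M → Bool, F ξ := by
    have l : ∑ ξ : Fin M → Bool, (F' ξ + F' (flip ξ)) ≤ ∑ ξ : Fin M → Bool, (F ξ + F (flip ξ)) :=
      Finset.sum_le_sum fun ξ _ => pointwise ξ
    rw [Finset.sum_add_distrib, Finset.sum_add_distrib, sum_flip F', sum_flip F] at l
    linarith
  linarith

lemma contraction {M : ℕ} {T : Type*} [Nonempty T] (h : T → Fin M → ℝ)
    (hb : ∀ t i, |h t i| ≤ 1) (φ : ℝ → ℝ)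
    (hφ : ∀ a b, |φ a - φ b| ≤ |a - b|) (hφ0 : φ 0 = 0) :
    ∑ ξ : Fin M → Bool, sSup (Set.range fun t => ∑ i, sg ξ i * φ (h t i)) ≤
      ∑ ξ : Fin M → Bool, sSup (Set.range fun t => ∑ i, sg ξ i * h t i) := by
  classical
  have hφb : ∀ t i, |φ (h t i)| ≤ 1 := by
    intro t i
    have := hφ (h t i) 0
    rw [hφ0, sub_zero, sub_zero] at this
    exact this.trans (hb t i)
  have H : ∀ A : Finset (Fin M),
      ∑ ξ : Fin M → Bool,
          sSup (Set.range fun t => ∑ i, sg ξ i * (if i ∈ A then φ (h t i) else h t i)) ≤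
        ∑ ξ : Fin M → Bool, sSup (Set.range fun t => ∑ i, sg ξ i * h t i) := by
    intro A
    induction A using Finset.induction_on with
    | empty => simp
    | insert _ _ hj => exact le_trans (contr_step h hb φ hφ hφb _ _ hj) (by assumption)
  have := H Finset.univ
  simpa using this


lemma card_bool_fun (M : ℕ) : (Finset.univ : Finset (Fin M → Bool)).card = 2 ^ M := by
  simp [Finset.card_univ]

lemma massart {M : ℕ} (hM : 0 < M) {J : Type*} [Fintype J] [Nonempty J]
    (v : J → Fin M → ℝ) (hv : ∀ j i, |v j i| ≤ 1) (hJ : 2 ≤ Fintype.card J) :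
    (2 ^ M : ℝ)⁻¹ * ∑ ξ : Fin M → Bool,
        Finset.univ.sup' Finset.univ_nonempty (fun j => ∑ i, sg ξ i * v j i) ≤
      2 * Real.sqrt (M * Real.log (Fintype.card J)) := by
  classical
  set K : ℝ := (Fintype.card J : ℝ) with hK
  have hK2 : (2 : ℝ) ≤ K := by rw [hK]; exact_mod_cast hJ
  have hKpos : (0 : ℝ) < K := by linarith
  have hlogK : 0 < Real.log K := Real.log_pos (by linarith)
  have hMpos : (0 : ℝ) < M := by exact_mod_cast hM
  set s : ℝ := Real.sqrt (M * Real.log K) with hs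
  have hspos : 0 < s := Real.sqrt_pos.2 (by positivity)
  have hs2 : s ^ 2 = M * Real.log K := Real.sq_sqrt (by positivity)
  set lam : ℝ := s / M with hlam
  have hlampos : 0 < lam := by positivity
  set A : ℝ := (2 ^ M : ℝ)⁻¹ * ∑ ξ : Fin M → Bool,
      Finset.univ.sup' Finset.univ_nonempty (fun j => ∑ i, sg ξ i * v j i) with hA
  set Sup : (Fin M → Bool) → ℝ :=
      fun ξ => Finset.univ.sup' Finset.univ_nonempty (fun j => ∑ i, sg ξ i * v j i) with hSup
  have hpow : (0 : ℝ) < (2 : ℝ) ^ M := by positivity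
  -- Jensen step
  have jensen : Real.exp (lam * A) ≤
      (2 ^ M : ℝ)⁻¹ * ∑ ξ : Fin M → Bool, Real.exp (lam * Sup ξ) := by
    have hw : ∑ _ξ : Fin M → Bool, (2 ^ M : ℝ)⁻¹ = 1 := by
      rw [Finset.sum_const, card_bool_fun, nsmul_eq_mul]
      push_cast
      field_simp
    have hmem : ∀ ξ ∈ (Finset.univ : Finset (Fin M → Bool)),
        lam * Sup ξ ∈ (Set.univ : Set ℝ) := fun _ _ => Set.mem_univ _
    have := convexOn_exp.map_sum_le (t := (Finset.univ : Finset (Fin M → Bool)))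
      (w := fun _ => (2 ^ M : ℝ)⁻¹) (p := fun ξ => lam * Sup ξ)
      (fun _ _ => by positivity) hw hmem
    simp only [smul_eq_mul] at this
    have e1 : lam * A = ∑ ξ : Fin M → Bool, (2 ^ M : ℝ)⁻¹ * (lam * Sup ξ) := by
      rw [hA, Finset.mul_sum, Finset.mul_sum]
      exact Finset.sum_congr rfl fun ξ _ => by ring
    rw [e1]
    calc Real.exp (∑ ξ : Fin M → Bool, (2 ^ M : ℝ)⁻¹ * (lam * Sup ξ)) ≤
        ∑ ξ : Fin M → Bool, (2 ^ M : ℝ)⁻¹ * Real.exp (lam * Sup ξ) := this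
      _ = (2 ^ M : ℝ)⁻¹ * ∑ ξ : Fin M → Bool, Real.exp (lam * Sup ξ) := by
          rw [Finset.mul_sum]
  -- bound exp of sup by sum over j
  have supexp : ∀ ξ : Fin M → Bool,
      Real.exp (lam * Sup ξ) ≤ ∑ j : J, Real.exp (lam * ∑ i, sg ξ i * v j i) := by
    intro ξ
    obtain ⟨j₀, _, hj₀⟩ := Finset.exists_mem_eq_sup' (Finset.univ_nonempty)
      (fun j : J => ∑ i, sg ξ i * v j i)
    rw [hSup]
    dsimp only
    rw [hj₀]
    exact Finset.single_le_sum (f := fun j : J => Real.exp (lam * ∑ i, sg ξ i * v j i))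
      (fun j _ => (Real.exp_pos _).le) (Finset.mem_univ j₀)
  -- MGF bound per j
  have mgf : ∀ j : J, ∑ ξ : Fin M → Bool, Real.exp (lam * ∑ i, sg ξ i * v j i) ≤
      (2 : ℝ) ^ M * Real.exp (lam ^ 2 / 2 * M) := by
    intro j
    have e1 : ∀ ξ : Fin M → Bool, Real.exp (lam * ∑ i, sg ξ i * v j i) =
        ∏ i, Real.exp (lam * (sg ξ i * v j i)) := by
      intro ξ
      rw [← Real.exp_sum, Finset.mul_sum]
    have e2 : ∑ ξ : Fin M → Bool, ∏ i, Real.exp (lam * (sg ξ i * v j i)) =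
        ∏ i, (Real.exp (lam * (1 * v j i)) + Real.exp (lam * (-1 * v j i))) := by
      have base := Finset.prod_univ_sum (fun _i : Fin M => (Finset.univ : Finset Bool))
        (fun i b => Real.exp (lam * ((if b then (1:ℝ) else -1) * v j i)))
      rw [Fintype.piFinset_univ] at base
      calc ∑ ξ : Fin M → Bool, ∏ i, Real.exp (lam * (sg ξ i * v j i))
          = ∑ ξ : Fin M → Bool, ∏ i,
              Real.exp (lam * ((if ξ i then (1:ℝ) else -1) * v j i)) := rfl
        _ = ∏ i, ∑ b : Bool, Real.exp (lam * ((if b then (1:ℝ) else -1) * v j i)) := base.symm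
        _ = ∏ i, (Real.exp (lam * (1 * v j i)) + Real.exp (lam * (-1 * v j i))) := by
            refine Finset.prod_congr rfl fun i _ => ?_
            rw [Fintype.sum_bool]
            norm_num
    have e3 : ∀ i, Real.exp (lam * (1 * v j i)) + Real.exp (lam * (-1 * v j i)) ≤
        2 * Real.exp (lam ^ 2 / 2) := by
      intro i
      have hcosh : Real.exp (lam * v j i) + Real.exp (-(lam * v j i)) =
          2 * Real.cosh (lam * v j i) := by
        rw [Real.cosh_eq]; ring
      have h1 : Real.cosh (lam * v j i) ≤ Real.exp ((lam * v j i) ^ 2 / 2) :=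
        Real.cosh_le_exp_half_sq _
      have h2 : (lam * v j i) ^ 2 / 2 ≤ lam ^ 2 / 2 := by
        have : (v j i) ^ 2 ≤ 1 := by
          have := hv j i
          nlinarith [abs_nonneg (v j i), sq_abs (v j i)]
        nlinarith [sq_nonneg lam]
      have e : lam * (1 * v j i) = lam * v j i := by ring
      have e' : lam * (-1 * v j i) = -(lam * v j i) := by ring
      rw [e, e', hcosh]
      have := Real.exp_le_exp.2 h2
      nlinarith [Real.exp_pos ((lam * v j i) ^ 2 / 2)]
    calc ∑ ξ : Fin M → Bool, Real.exp (lam * ∑ i, sg ξ i * v j i)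
        = ∏ i, (Real.exp (lam * (1 * v j i)) + Real.exp (lam * (-1 * v j i))) := by
          rw [← e2]; exact Finset.sum_congr rfl fun ξ _ => e1 ξ
      _ ≤ ∏ _i : Fin M, 2 * Real.exp (lam ^ 2 / 2) := by
          refine Finset.prod_le_prod (fun i _ => by positivity) (fun i _ => e3 i)
      _ = (2 : ℝ) ^ M * Real.exp (lam ^ 2 / 2 * M) := by
          rw [Finset.prod_const, Finset.card_univ, Fintype.card_fin, mul_pow,
            ← Real.exp_nat_mul]
          ring_nf
  -- combine
  have combined : Real.exp (lam * A) ≤ Real.exp (Real.log K + lam ^ 2 / 2 * M) := by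
    calc Real.exp (lam * A) ≤ (2 ^ M : ℝ)⁻¹ * ∑ ξ : Fin M → Bool, Real.exp (lam * Sup ξ) :=
          jensen
      _ ≤ (2 ^ M : ℝ)⁻¹ * ∑ ξ : Fin M → Bool, ∑ j : J, Real.exp (lam * ∑ i, sg ξ i * v j i) := by
          refine mul_le_mul_of_nonneg_left ?_ (by positivity)
          exact Finset.sum_le_sum fun ξ _ => supexp ξ
      _ = (2 ^ M : ℝ)⁻¹ * ∑ j : J, ∑ ξ : Fin M → Bool, Real.exp (lam * ∑ i, sg ξ i * v j i) := by
          rw [Finset.sum_comm]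
      _ ≤ (2 ^ M : ℝ)⁻¹ * ∑ _j : J, (2 : ℝ) ^ M * Real.exp (lam ^ 2 / 2 * M) := by
          refine mul_le_mul_of_nonneg_left ?_ (by positivity)
          exact Finset.sum_le_sum fun j _ => mgf j
      _ = K * Real.exp (lam ^ 2 / 2 * M) := by
          rw [Finset.sum_const, Finset.card_univ, nsmul_eq_mul]
          field_simp
          ring
      _ = Real.exp (Real.log K + lam ^ 2 / 2 * M) := by
          rw [Real.exp_add, Real.exp_log hKpos]
  have key : lam * A ≤ Real.log K + lam ^ 2 / 2 * M := Real.exp_le_exp.1 combined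
  -- arithmetic: lam = s/M, s^2 = M log K ⇒ A ≤ (3/2) s ≤ 2 s
  have harith : s / M * A ≤ Real.log K + (s / M) ^ 2 / 2 * M := by
    rw [← hlam]; exact key
  have hsA : s * A ≤ (3 / 2) * s ^ 2 := by
    have h1 : (s / M) ^ 2 / 2 * M = s ^ 2 / (2 * M) := by field_simp
    rw [h1] at harith
    have h2 : s ^ 2 / (2 * M) = Real.log K / 2 := by
      rw [hs2]; field_simp
    rw [h2] at harith
    have h3 : s * A ≤ M * ((3/2) * Real.log K) := by
      have := mul_le_mul_of_nonneg_left harith (le_of_lt hMpos)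
      calc s * A = M * (s / M * A) := by field_simp
        _ ≤ M * (Real.log K + Real.log K / 2) := this
        _ = M * ((3/2) * Real.log K) := by ring
    calc s * A ≤ M * ((3/2) * Real.log K) := h3
      _ = (3/2) * s ^ 2 := by rw [hs2]; ring
  nlinarith [hspos, sq_nonneg s]


section Neuron

variable {d M : ℕ}

/-- the ℓ¹ ball of weight-bias pairs -/
def Vb (d : ℕ) : Type := {p : (Fin d → ℝ) × ℝ // (∑ j, |p.1 j|) + |p.2| ≤ 1}

instance : Nonempty (Vb d) := ⟨⟨((fun _ => 0), 0), by simp⟩⟩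

/-- vertex functions: ±coordinates and ±constant 1 -/
def vert (y : Fin M → Fin d → ℝ) (jj : Bool × (Fin d ⊕ Unit)) (i : Fin M) : ℝ :=
  (if jj.1 then (1:ℝ) else -1) * Sum.elim (y i) (fun _ => (1:ℝ)) jj.2

lemma abs_vert_le (y : Fin M → Fin d → ℝ) (hy : ∀ i j, |y i j| ≤ 1) (jj) (i) :
    |vert y jj i| ≤ 1 := by
  rcases jj with ⟨s, j | u⟩ <;> rcases s <;>
    simp [vert, abs_mul] <;> try exact hy i _

lemma abs_lin_le (y : Fin M → Fin d → ℝ) (hy : ∀ i j, |y i j| ≤ 1) (p : Vb d) (i : Fin M) :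
    |(∑ j, p.1.1 j * y i j) + p.1.2| ≤ 1 := by
  calc |(∑ j, p.1.1 j * y i j) + p.1.2| ≤ |∑ j, p.1.1 j * y i j| + |p.1.2| := abs_add_le _ _
    _ ≤ (∑ j, |p.1.1 j * y i j|) + |p.1.2| :=
        add_le_add (Finset.abs_sum_le_sum_abs _ _) le_rfl
    _ ≤ (∑ j, |p.1.1 j|) + |p.1.2| := by
        refine add_le_add (Finset.sum_le_sum fun j _ => ?_) le_rfl
        rw [abs_mul]
        exact mul_le_of_le_one_right (abs_nonneg _) (hy i j)
    _ ≤ 1 := p.2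

lemma lin_le_vertmax (y : Fin M → Fin d → ℝ) (ξ : Fin M → Bool) (p : Vb d) :
    ∑ i, sg ξ i * ((∑ j, p.1.1 j * y i j) + p.1.2) ≤
      Finset.univ.sup' Finset.univ_nonempty
        (fun jj : Bool × (Fin d ⊕ Unit) => ∑ i, sg ξ i * vert y jj i) := by
  classical
  obtain ⟨⟨w, b⟩, hp⟩ := p
  set L := Finset.univ.sup' Finset.univ_nonempty
    (fun jj : Bool × (Fin d ⊕ Unit) => ∑ i, sg ξ i * vert y jj i) with hL
  have hvert : ∀ jj, ∑ i, sg ξ i * vert y jj i ≤ L := fun jj =>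
    Finset.le_sup' (f := fun jj : Bool × (Fin d ⊕ Unit) => ∑ i, sg ξ i * vert y jj i)
      (Finset.mem_univ jj)
  have cabs : ∀ j : Fin d, |∑ i, sg ξ i * y i j| ≤ L := by
    intro j
    rw [abs_le]
    constructor
    · have := hvert (false, Sum.inl j)
      have e : ∑ i, sg ξ i * vert y (false, Sum.inl j) i = -∑ i, sg ξ i * y i j := by
        rw [← Finset.sum_neg_distrib]
        exact Finset.sum_congr rfl fun i _ => by first | (simp [vert]; ring) | simp [vert]
      rw [e] at this
      linarith
    · have := hvert (true, Sum.inl j)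
      have e : ∑ i, sg ξ i * vert y (true, Sum.inl j) i = ∑ i, sg ξ i * y i j := by
        exact Finset.sum_congr rfl fun i _ => by simp [vert]
      rw [e] at this
      linarith
  have c0abs : |∑ i, sg ξ i| ≤ L := by
    rw [abs_le]
    constructor
    · have := hvert (false, Sum.inr ())
      have e : ∑ i, sg ξ i * vert y (false, Sum.inr ()) i = -∑ i, sg ξ i := by
        rw [← Finset.sum_neg_distrib]
        exact Finset.sum_congr rfl fun i _ => by simp [vert]
      rw [e] at this
      linarith
    · have := hvert (true, Sum.inr ())
      have e : ∑ i, sg ξ i * vert y (true, Sum.inr ()) i = ∑ i, sg ξ i := by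
        exact Finset.sum_congr rfl fun i _ => by simp [vert]
      rw [e] at this
      linarith
  have hL0 : 0 ≤ L := le_trans (abs_nonneg _) c0abs
  have expand : ∑ i, sg ξ i * ((∑ j, w j * y i j) + b)
      = (∑ j, w j * ∑ i, sg ξ i * y i j) + b * ∑ i, sg ξ i := by
    simp only [mul_add, Finset.sum_add_distrib, Finset.mul_sum]
    congr 1
    · rw [Finset.sum_comm]
      exact Finset.sum_congr rfl fun j _ => Finset.sum_congr rfl fun i _ => by ring
    · exact Finset.sum_congr rfl fun i _ => by ring
  calc ∑ i, sg ξ i * ((∑ j, w j * y i j) + b)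
      = (∑ j, w j * ∑ i, sg ξ i * y i j) + b * ∑ i, sg ξ i := expand
    _ ≤ (∑ j, |w j| * L) + |b| * L := by
        refine add_le_add (Finset.sum_le_sum fun j _ => ?_) ?_
        · calc w j * ∑ i, sg ξ i * y i j ≤ |w j * ∑ i, sg ξ i * y i j| := le_abs_self _
            _ = |w j| * |∑ i, sg ξ i * y i j| := abs_mul _ _
            _ ≤ |w j| * L := mul_le_mul_of_nonneg_left (cabs j) (abs_nonneg _)
        · calc b * ∑ i, sg ξ i ≤ |b * ∑ i, sg ξ i| := le_abs_self _
            _ = |b| * |∑ i, sg ξ i| := abs_mul _ _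
            _ ≤ |b| * L := mul_le_mul_of_nonneg_left c0abs (abs_nonneg _)
    _ = ((∑ j, |w j|) + |b|) * L := by rw [add_mul, Finset.sum_mul]
    _ ≤ 1 * L := mul_le_mul_of_nonneg_right hp hL0
    _ = L := one_mul L

lemma neuron_bound (hM : 0 < M) (y : Fin M → Fin d → ℝ) (hy : ∀ i j, |y i j| ≤ 1) :
    (2 ^ M : ℝ)⁻¹ * ∑ ξ : Fin M → Bool,
        (sSup (Set.range fun p : Vb d =>
            ∑ i, sg ξ i * max ((∑ j, p.1.1 j * y i j) + p.1.2) 0) +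
         sSup (Set.range fun p : Vb d =>
            ∑ i, sg ξ i * (-(max ((∑ j, p.1.1 j * y i j) + p.1.2) 0)))) ≤
      4 * Real.sqrt (M * Real.log (2 * d + 2)) := by
  classical
  set h : Vb d → Fin M → ℝ := fun p i => (∑ j, p.1.1 j * y i j) + p.1.2 with hh
  have hb : ∀ p i, |h p i| ≤ 1 := fun p i => abs_lin_le y hy p i
  have lip1 : ∀ a b : ℝ, |max a 0 - max b 0| ≤ |a - b| :=
    fun a b => abs_max_sub_max_le_abs a b 0
  have c1 : ∑ ξ : Fin M → Bool,
      sSup (Set.range fun p : Vb d => ∑ i, sg ξ i * max (h p i) 0) ≤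
      ∑ ξ : Fin M → Bool, sSup (Set.range fun p : Vb d => ∑ i, sg ξ i * h p i) :=
    contraction h hb (fun u => max u 0) lip1 (by simp)
  have c2 : ∑ ξ : Fin M → Bool,
      sSup (Set.range fun p : Vb d => ∑ i, sg ξ i * (-(max (h p i) 0))) ≤
      ∑ ξ : Fin M → Bool, sSup (Set.range fun p : Vb d => ∑ i, sg ξ i * h p i) := by
    refine contraction h hb (fun u => -(max u 0)) ?_ (by simp)
    intro a b
    calc |(-(max a 0)) - (-(max b 0))| = |max b 0 - max a 0| := by ring_nf
      _ ≤ |b - a| := lip1 b a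
      _ = |a - b| := abs_sub_comm b a
  have linmax : ∀ ξ : Fin M → Bool,
      sSup (Set.range fun p : Vb d => ∑ i, sg ξ i * h p i) ≤
        Finset.univ.sup' Finset.univ_nonempty
          (fun jj : Bool × (Fin d ⊕ Unit) => ∑ i, sg ξ i * vert y jj i) := by
    intro ξ
    refine csSup_le (Set.range_nonempty _) ?_
    rintro _ ⟨p, rfl⟩
    exact lin_le_vertmax y ξ p
  have card_eq : Fintype.card (Bool × (Fin d ⊕ Unit)) = 2 * d + 2 := by
    simp [Fintype.card_prod, Fintype.card_sum]
    ring
  have mas := massart hM (vert y) (abs_vert_le y hy) (by rw [card_eq]; omega)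
  have logeq : Real.log (Fintype.card (Bool × (Fin d ⊕ Unit)) : ℝ) =
      Real.log (2 * d + 2 : ℝ) := by
    rw [card_eq]; norm_num
  rw [logeq] at mas
  have sumle : ∑ ξ : Fin M → Bool,
      (sSup (Set.range fun p : Vb d => ∑ i, sg ξ i * max (h p i) 0) +
       sSup (Set.range fun p : Vb d => ∑ i, sg ξ i * (-(max (h p i) 0)))) ≤
      2 * ∑ ξ : Fin M → Bool,
        Finset.univ.sup' Finset.univ_nonempty
          (fun jj : Bool × (Fin d ⊕ Unit) => ∑ i, sg ξ i * vert y jj i) := by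
    rw [Finset.sum_add_distrib, two_mul]
    refine add_le_add ?_ ?_
    · exact le_trans c1 (Finset.sum_le_sum fun ξ _ => linmax ξ)
    · exact le_trans c2 (Finset.sum_le_sum fun ξ _ => linmax ξ)
  have hpow : (0:ℝ) < (2:ℝ)^M := by positivity
  calc (2 ^ M : ℝ)⁻¹ * ∑ ξ : Fin M → Bool,
        (sSup (Set.range fun p : Vb d => ∑ i, sg ξ i * max (h p i) 0) +
         sSup (Set.range fun p : Vb d => ∑ i, sg ξ i * (-(max (h p i) 0))))
      ≤ (2 ^ M : ℝ)⁻¹ * (2 * ∑ ξ : Fin M → Bool,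
          Finset.univ.sup' Finset.univ_nonempty
            (fun jj : Bool × (Fin d ⊕ Unit) => ∑ i, sg ξ i * vert y jj i)) :=
        mul_le_mul_of_nonneg_left sumle (by positivity)
    _ = 2 * ((2 ^ M : ℝ)⁻¹ * ∑ ξ : Fin M → Bool,
          Finset.univ.sup' Finset.univ_nonempty
            (fun jj : Bool × (Fin d ⊕ Unit) => ∑ i, sg ξ i * vert y jj i)) := by ring
    _ ≤ 2 * (2 * Real.sqrt (M * Real.log (2 * d + 2))) := by
        have := mas
        nlinarith [mas]
    _ = 4 * Real.sqrt (M * Real.log (2 * d + 2)) := by ring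

end Neuron


lemma avg_le {m : ℕ} (hm : 1 ≤ m) (c : Fin m → ℝ) (hc : ∀ i, 0 ≤ c i) {Q : ℝ} (hQ : 0 ≤ Q)
    (h : (m:ℝ)⁻¹ * ∑ i, (c i)^2 ≤ Q^2) : (m:ℝ)⁻¹ * ∑ i, c i ≤ Q := by
  have hm0 : (0:ℝ) < m := by exact_mod_cast hm
  have h1 : (∑ i, c i)^2 ≤ m * ∑ i, (c i)^2 := by
    have := sq_sum_le_card_mul_sum_sq (s := (Finset.univ : Finset (Fin m))) (f := c)
    simpa using this
  have hsum : 0 ≤ ∑ i, c i := Finset.sum_nonneg fun i _ => hc i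
  have h2 : ((m:ℝ)⁻¹ * ∑ i, c i)^2 ≤ Q^2 := by
    have e : ((m:ℝ)⁻¹ * ∑ i, c i)^2 = (m:ℝ)⁻¹ * ((m:ℝ)⁻¹ * (∑ i, c i)^2) := by ring
    rw [e]
    have l1 : (m:ℝ)⁻¹ * (∑ i, c i)^2 ≤ (m:ℝ)⁻¹ * (m * ∑ i, (c i)^2) :=
      mul_le_mul_of_nonneg_left h1 (by positivity)
    have l2 : (m:ℝ)⁻¹ * (m * ∑ i, (c i)^2) = ∑ i, (c i)^2 := by field_simp
    calc (m:ℝ)⁻¹ * ((m:ℝ)⁻¹ * (∑ i, c i)^2) ≤ (m:ℝ)⁻¹ * ∑ i, (c i)^2 := by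
          refine mul_le_mul_of_nonneg_left ?_ (by positivity)
          rw [← l2]; exact l1
      _ ≤ Q^2 := h
  nlinarith [mul_nonneg (inv_nonneg.2 hm0.le) hsum]

lemma abs_relu_le (u : ℝ) : |max u 0| ≤ |u| := by
  rw [abs_of_nonneg (le_max_right u 0)]
  exact max_le (le_abs_self u) (abs_nonneg u)

lemma relu_smul (C z : ℝ) (hC : 0 ≤ C) : max (C * z) 0 = C * max z 0 := by
  rw [mul_max_of_nonneg _ _ hC, mul_zero]

lemma sigma_growth {σ : ℝ → ℝ} {γ : ℝ}
    (hσ1 : ∃ (K : ℕ) (abar wbar bbar : Fin K → ℝ),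
      (∀ t : ℝ, |σ t - ∑ k, abar k * max (wbar k * t + bbar k) 0| ≤ 1) ∧
      (∑ k, |abar k| * (|wbar k| + |bbar k|)) ≤ γ) :
    ∀ t : ℝ, |σ t| ≤ 1 + γ * (|t| + 1) := by
  obtain ⟨K, abar, wbar, bbar, happ, hγs⟩ := hσ1
  intro t
  have hg : |∑ k, abar k * max (wbar k * t + bbar k) 0| ≤ γ * (|t| + 1) := by
    calc |∑ k, abar k * max (wbar k * t + bbar k) 0|
        ≤ ∑ k, |abar k * max (wbar k * t + bbar k) 0| := Finset.abs_sum_le_sum_abs _ _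
      _ ≤ ∑ k, |abar k| * ((|wbar k| + |bbar k|) * (|t| + 1)) := by
          refine Finset.sum_le_sum fun k _ => ?_
          rw [abs_mul]
          refine mul_le_mul_of_nonneg_left ?_ (abs_nonneg _)
          calc |max (wbar k * t + bbar k) 0| ≤ |wbar k * t + bbar k| := abs_relu_le _
            _ ≤ |wbar k * t| + |bbar k| := abs_add_le _ _
            _ = |wbar k| * |t| + |bbar k| := by rw [abs_mul]
            _ ≤ (|wbar k| + |bbar k|) * (|t| + 1) := by
                nlinarith [abs_nonneg (wbar k), abs_nonneg (bbar k), abs_nonneg t]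
      _ = (∑ k, |abar k| * (|wbar k| + |bbar k|)) * (|t| + 1) := by
          rw [Finset.sum_mul]
          exact Finset.sum_congr rfl fun k _ => by ring
      _ ≤ γ * (|t| + 1) := by
          refine mul_le_mul_of_nonneg_right hγs (by positivity)
  calc |σ t| = |(σ t - ∑ k, abar k * max (wbar k * t + bbar k) 0) +
      ∑ k, abar k * max (wbar k * t + bbar k) 0| := by rw [sub_add_cancel]
    _ ≤ |σ t - ∑ k, abar k * max (wbar k * t + bbar k) 0| +
        |∑ k, abar k * max (wbar k * t + bbar k) 0| := abs_add_le _ _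
    _ ≤ 1 + γ * (|t| + 1) := add_le_add (happ t) hg


end RadAux

set_option maxHeartbeats 2000000 in
open RadAux in
/-- Rademacher bound for `G`-averaged shallow networks with an activation `σ`
uniformly approximable by ReLU combinations of path norm at most `γ`:
`R̂_S(ℱ_Q) ≤ 4 γ Q √(log(2d+2)/M)`. -/
theorem empRad_sigmaClassG_bound {d M : ℕ} (hM : 0 < M)
    {G : Type*} [Group G] [Fintype G] [MulAction G (Fin d → ℝ)]
    (hlin : ∀ g : G, IsLinearMap ℝ (fun z : Fin d → ℝ => g • z))
    (Ω : Set (Fin d → ℝ))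
    (hΩball : ∀ z ∈ Ω, ∀ i, |z i| ≤ 1)
    (hΩ : ∀ (g : G), ∀ z ∈ Ω, ∀ i, |(g • z) i| ≤ 1)
    (σ : ℝ → ℝ) (γ : ℝ) (hγ : 0 ≤ γ)
    (hσ : ∀ ε > (0 : ℝ), ∃ (K : ℕ) (abar wbar bbar : Fin K → ℝ),
      (∀ t : ℝ, |σ t - ∑ k, abar k * max (wbar k * t + bbar k) 0| ≤ ε) ∧
      (∑ k, |abar k| * (|wbar k| + |bbar k|)) ≤ γ)
    (Q : ℝ) (hQ : 0 ≤ Q)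
    (x : Fin M → Fin d → ℝ) (hx : ∀ i, x i ∈ Ω) :
    empRad (sigmaClassG G σ Q) x ≤
      4 * γ * Q * Real.sqrt (Real.log (2 * d + 2) / M) := by
  classical
  have hMR : (0:ℝ) < M := by exact_mod_cast hM
  have hcGpos : (0:ℝ) < (Fintype.card G : ℝ) := by exact_mod_cast Fintype.card_pos
  have hyb : ∀ (g : G) (i : Fin M) (j : Fin d), |(g • x i) j| ≤ 1 :=
    fun g i j => hΩ g (x i) (hx i) j
  set Np : G → (Fin M → Bool) → ℝ := fun g ξ =>
    sSup (Set.range fun p : Vb d =>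
      ∑ i, sg ξ i * max ((∑ j, p.1.1 j * (g • x i) j) + p.1.2) 0) with hNpdef
  set Nm : G → (Fin M → Bool) → ℝ := fun g ξ =>
    sSup (Set.range fun p : Vb d =>
      ∑ i, sg ξ i * (-(max ((∑ j, p.1.1 j * (g • x i) j) + p.1.2) 0))) with hNmdef
  have bddNp : ∀ (g : G) (ξ : Fin M → Bool), BddAbove (Set.range fun p : Vb d =>
      ∑ i, sg ξ i * max ((∑ j, p.1.1 j * (g • x i) j) + p.1.2) 0) := by
    intro g ξ
    exact bdd_range_sum _ 1
      (fun p i => (abs_relu_le _).trans (abs_lin_le (fun i => g • x i) (hyb g) p i)) ξ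
  have bddNm : ∀ (g : G) (ξ : Fin M → Bool), BddAbove (Set.range fun p : Vb d =>
      ∑ i, sg ξ i * (-(max ((∑ j, p.1.1 j * (g • x i) j) + p.1.2) 0))) := by
    intro g ξ
    refine bdd_range_sum _ 1 (fun p i => ?_) ξ
    rw [abs_neg]
    exact (abs_relu_le _).trans (abs_lin_le (fun i => g • x i) (hyb g) p i)
  have Npnn : ∀ (g : G) (ξ : Fin M → Bool), 0 ≤ Np g ξ := by
    intro g ξ
    refine le_csSup (bddNp g ξ) ⟨⟨((fun _ => 0), 0), by simp⟩, by simp⟩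
  have Nmnn : ∀ (g : G) (ξ : Fin M → Bool), 0 ≤ Nm g ξ := by
    intro g ξ
    refine le_csSup (bddNm g ξ) ⟨⟨((fun _ => 0), 0), by simp⟩, by simp⟩
  -- STEP A : bound the supremum of the class for each fixed sign pattern
  have stepA : ∀ ξ : Fin M → Bool,
      sSup ((fun f : (Fin d → ℝ) → ℝ => ∑ i, sg ξ i * f (x i)) '' sigmaClassG G σ Q) ≤
        γ * Q * ((Fintype.card G : ℝ)⁻¹ * ∑ g : G, (Np g ξ + Nm g ξ)) := by
    intro ξ
    have hAvgDnn : 0 ≤ (Fintype.card G : ℝ)⁻¹ * ∑ g : G, (Np g ξ + Nm g ξ) :=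
      mul_nonneg (by positivity)
        (Finset.sum_nonneg fun g _ => add_nonneg (Npnn g ξ) (Nmnn g ξ))
    refine Real.sSup_le ?_ (by positivity)
    rintro v ⟨f, hf, rfl⟩
    obtain ⟨m, hm, a, w, b, hnorm, rfl⟩ := hf
    have hm0 : (0:ℝ) < m := by exact_mod_cast hm
    refine le_of_forall_sub_le fun ε hε => ?_
    rw [sub_le_iff_le_add]
    set ε' : ℝ := ε / (M * (Q + 1)) with hε'
    have hε'pos : 0 < ε' := by rw [hε']; positivity
    obtain ⟨K, ab, wb, bb, happ, hγs⟩ := hσ ε' hε'pos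
    set γb : ℝ := ∑ k, |ab k| * (|wb k| + |bb k|) with hγb
    have hγbnn : 0 ≤ γb := Finset.sum_nonneg fun k _ => by positivity
    set Nrm : Fin m → ℝ := fun i' => (∑ j, |w i' j|) + |b i'| + 1 with hNrmdef
    have hNrm1 : ∀ i', (1:ℝ) ≤ Nrm i' := by
      intro i'
      have h1 : (0:ℝ) ≤ ∑ j, |w i' j| := Finset.sum_nonneg fun j _ => abs_nonneg _
      have h2 := abs_nonneg (b i')
      show (1:ℝ) ≤ (∑ j, |w i' j|) + |b i'| + 1
      linarith
    set U : Fin m → G → Fin M → ℝ :=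
      fun i' g i => (∑ j, w i' j * (g • x i) j) + b i' with hU
    -- the per-(i',g) decomposition bound
    have hdecomp : ∀ (i' : Fin m) (g : G),
        a i' * ∑ i, sg ξ i * σ (U i' g i) ≤
          |a i'| * (M * ε') + |a i'| * Nrm i' * γb * (Np g ξ + Nm g ξ) := by
      intro i' g
      have d1 : ∑ i, sg ξ i * σ (U i' g i) =
          (∑ k, ab k * ∑ i, sg ξ i * max (wb k * U i' g i + bb k) 0) +
            ∑ i, sg ξ i * (σ (U i' g i) - ∑ k, ab k * max (wb k * U i' g i + bb k) 0) := by
        have per : ∀ i, sg ξ i * σ (U i' g i) =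
            (∑ k, ab k * (sg ξ i * max (wb k * U i' g i + bb k) 0)) +
              sg ξ i * (σ (U i' g i) - ∑ k, ab k * max (wb k * U i' g i + bb k) 0) := by
          intro i
          rw [mul_sub, Finset.mul_sum]
          have e : ∑ k, sg ξ i * (ab k * max (wb k * U i' g i + bb k) 0) =
              ∑ k, ab k * (sg ξ i * max (wb k * U i' g i + bb k) 0) :=
            Finset.sum_congr rfl fun k _ => by ring
          rw [e]
          ring
        rw [Finset.sum_congr rfl fun i _ => per i, Finset.sum_add_distrib]
        congr 1
        rw [Finset.sum_comm]
        exact Finset.sum_congr rfl fun k _ => by rw [Finset.mul_sum]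
      have derr : |∑ i, sg ξ i * (σ (U i' g i) -
          ∑ k, ab k * max (wb k * U i' g i + bb k) 0)| ≤ M * ε' := by
        calc |∑ i, sg ξ i * (σ (U i' g i) - ∑ k, ab k * max (wb k * U i' g i + bb k) 0)|
            ≤ ∑ i, |sg ξ i * (σ (U i' g i) - ∑ k, ab k * max (wb k * U i' g i + bb k) 0)| :=
              Finset.abs_sum_le_sum_abs _ _
          _ ≤ ∑ _i : Fin M, ε' := by
              refine Finset.sum_le_sum fun i _ => ?_
              rw [abs_mul, abs_sg, one_mul]
              exact happ (U i' g i)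
          _ = M * ε' := by
              rw [Finset.sum_const, nsmul_eq_mul, Finset.card_univ, Fintype.card_fin]
      have dk : ∀ k : Fin K,
          (a i' * ab k) * ∑ i, sg ξ i * max (wb k * U i' g i + bb k) 0 ≤
            |a i'| * |ab k| * ((|wb k| + |bb k|) * Nrm i') * (Np g ξ + Nm g ξ) := by
        intro k
        set C : ℝ := (|wb k| + |bb k|) * Nrm i' with hC
        have hCnn : 0 ≤ C := by
          rw [hC]
          exact mul_nonneg (by positivity) (le_trans zero_le_one (hNrm1 i'))
        have arg_eq : ∀ i, wb k * U i' g i + bb k =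
            (∑ j, wb k * w i' j * (g • x i) j) + (wb k * b i' + bb k) := by
          intro i
          show wb k * ((∑ j, w i' j * (g • x i) j) + b i') + bb k = _
          rw [mul_add, Finset.mul_sum]
          have e : ∑ j, wb k * (w i' j * (g • x i) j) = ∑ j, wb k * w i' j * (g • x i) j :=
            Finset.sum_congr rfl fun j _ => by ring
          rw [e]
          ring
        rcases eq_or_lt_of_le hCnn with hC0 | hCpos
        · -- degenerate: wb k = 0 and bb k = 0
          have hNrmpos : (0:ℝ) < Nrm i' := lt_of_lt_of_le zero_lt_one (hNrm1 i')
          have hwbb : |wb k| + |bb k| = 0 := by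
            by_contra hne
            have h1 : 0 < |wb k| + |bb k| := lt_of_le_of_ne (by positivity) (Ne.symm hne)
            exact absurd hC0.symm (ne_of_gt (by rw [hC]; exact mul_pos h1 hNrmpos))
          have hwb : wb k = 0 := by
            have h1 := abs_nonneg (wb k); have h2 := abs_nonneg (bb k)
            exact abs_eq_zero.1 (by linarith)
          have hbb : bb k = 0 := by
            have h1 := abs_nonneg (wb k); have h2 := abs_nonneg (bb k)
            exact abs_eq_zero.1 (by linarith)
          have hz : ∑ i, sg ξ i * max (wb k * U i' g i + bb k) 0 = 0 := by
            refine Finset.sum_eq_zero fun i _ => ?_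
            rw [hwb, hbb]
            simp
          rw [hz, mul_zero]
          exact mul_nonneg (mul_nonneg (mul_nonneg (abs_nonneg _) (abs_nonneg _)) hCnn)
            (add_nonneg (Npnn g ξ) (Nmnn g ξ))
        · -- nondegenerate: rescale into the unit ball
          have hp : (∑ j, |wb k * w i' j / C|) + |(wb k * b i' + bb k) / C| ≤ 1 := by
            have e1 : ∑ j, |wb k * w i' j / C| = (∑ j, |wb k * w i' j|) / C := by
              rw [Finset.sum_div]
              exact Finset.sum_congr rfl fun j _ => by rw [abs_div, abs_of_pos hCpos]
            have e2 : |(wb k * b i' + bb k) / C| = |wb k * b i' + bb k| / C := by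
              rw [abs_div, abs_of_pos hCpos]
            rw [e1, e2, ← add_div, div_le_one hCpos]
            have l1 : ∑ j, |wb k * w i' j| = |wb k| * ∑ j, |w i' j| := by
              rw [Finset.mul_sum]
              exact Finset.sum_congr rfl fun j _ => abs_mul _ _
            have l2 : |wb k * b i' + bb k| ≤ |wb k| * |b i'| + |bb k| := by
              calc |wb k * b i' + bb k| ≤ |wb k * b i'| + |bb k| := abs_add_le _ _
                _ = |wb k| * |b i'| + |bb k| := by rw [abs_mul]
            have hwnn : (0:ℝ) ≤ ∑ j, |w i' j| := Finset.sum_nonneg fun j _ => abs_nonneg _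
            have hCval : C = (|wb k| + |bb k|) * ((∑ j, |w i' j|) + |b i'| + 1) := hC
            rw [l1, hCval]
            nlinarith [abs_nonneg (wb k), abs_nonneg (bb k), abs_nonneg (b i')]
          set p : Vb d := ⟨((fun j => wb k * w i' j / C), (wb k * b i' + bb k) / C), hp⟩
            with hpdef
          have scale : ∀ i, max (wb k * U i' g i + bb k) 0 =
              C * max ((∑ j, p.1.1 j * (g • x i) j) + p.1.2) 0 := by
            intro i
            rw [← relu_smul _ _ hCnn]
            congr 1
            rw [arg_eq i]
            show _ = C * ((∑ j, wb k * w i' j / C * (g • x i) j) + (wb k * b i' + bb k) / C)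
            rw [mul_add, Finset.mul_sum]
            congr 1
            · refine Finset.sum_congr rfl fun j _ => ?_
              field_simp
            · field_simp
          set Rp : ℝ := ∑ i, sg ξ i * max ((∑ j, p.1.1 j * (g • x i) j) + p.1.2) 0
            with hRp
          have rk_eq : ∑ i, sg ξ i * max (wb k * U i' g i + bb k) 0 = C * Rp := by
            rw [hRp, Finset.mul_sum]
            exact Finset.sum_congr rfl fun i _ => by rw [scale i]; ring
          have hRpNp : Rp ≤ Np g ξ := le_csSup (bddNp g ξ) ⟨p, rfl⟩
          have hRpNm : -Rp ≤ Nm g ξ := by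
            refine le_csSup (bddNm g ξ) ⟨p, ?_⟩
            rw [hRp, ← Finset.sum_neg_distrib]
            exact Finset.sum_congr rfl fun i _ => by ring
          rw [rk_eq]
          rcases le_or_gt 0 (a i' * ab k) with hs | hs
          · have habs : |a i'| * |ab k| = a i' * ab k := by
              rw [← abs_mul, abs_of_nonneg hs]
            rw [habs]
            calc (a i' * ab k) * (C * Rp) = (a i' * ab k * C) * Rp := by ring
              _ ≤ (a i' * ab k * C) * Np g ξ :=
                  mul_le_mul_of_nonneg_left hRpNp (mul_nonneg hs hCnn)
              _ ≤ (a i' * ab k * C) * (Np g ξ + Nm g ξ) :=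
                  mul_le_mul_of_nonneg_left (le_add_of_nonneg_right (Nmnn g ξ))
                    (mul_nonneg hs hCnn)
              _ = a i' * ab k * C * (Np g ξ + Nm g ξ) := rfl
          · have habs : |a i'| * |ab k| = -(a i' * ab k) := by
              rw [← abs_mul, abs_of_neg hs]
            rw [habs]
            have hsn : 0 ≤ -(a i' * ab k) := by linarith
            calc (a i' * ab k) * (C * Rp) = (-(a i' * ab k) * C) * (-Rp) := by ring
              _ ≤ (-(a i' * ab k) * C) * Nm g ξ :=
                  mul_le_mul_of_nonneg_left hRpNm (mul_nonneg hsn hCnn)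
              _ ≤ (-(a i' * ab k) * C) * (Np g ξ + Nm g ξ) :=
                  mul_le_mul_of_nonneg_left (le_add_of_nonneg_left (Npnn g ξ))
                    (mul_nonneg hsn hCnn)
              _ = -(a i' * ab k) * C * (Np g ξ + Nm g ξ) := rfl
      -- assemble the per-(i',g) bound
      rw [d1, mul_add]
      have t1 : a i' * ∑ i, sg ξ i * (σ (U i' g i) -
          ∑ k, ab k * max (wb k * U i' g i + bb k) 0) ≤ |a i'| * (M * ε') := by
        calc a i' * ∑ i, sg ξ i * (σ (U i' g i) - ∑ k, ab k * max (wb k * U i' g i + bb k) 0)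
            ≤ |a i' * ∑ i, sg ξ i * (σ (U i' g i) -
                ∑ k, ab k * max (wb k * U i' g i + bb k) 0)| := le_abs_self _
          _ = |a i'| * |∑ i, sg ξ i * (σ (U i' g i) -
                ∑ k, ab k * max (wb k * U i' g i + bb k) 0)| := abs_mul _ _
          _ ≤ |a i'| * (M * ε') := mul_le_mul_of_nonneg_left derr (abs_nonneg _)
      have t2 : a i' * ∑ k, ab k * ∑ i, sg ξ i * max (wb k * U i' g i + bb k) 0 ≤
          |a i'| * Nrm i' * γb * (Np g ξ + Nm g ξ) := by
        have e : a i' * ∑ k, ab k * ∑ i, sg ξ i * max (wb k * U i' g i + bb k) 0 =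
            ∑ k, (a i' * ab k) * ∑ i, sg ξ i * max (wb k * U i' g i + bb k) 0 := by
          rw [Finset.mul_sum]
          exact Finset.sum_congr rfl fun k _ => by ring
        rw [e]
        calc ∑ k, (a i' * ab k) * ∑ i, sg ξ i * max (wb k * U i' g i + bb k) 0
            ≤ ∑ k, |a i'| * |ab k| * ((|wb k| + |bb k|) * Nrm i') * (Np g ξ + Nm g ξ) :=
              Finset.sum_le_sum fun k _ => dk k
          _ = ∑ k, ((|a i'| * Nrm i') * (|ab k| * (|wb k| + |bb k|))) * (Np g ξ + Nm g ξ) :=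
              Finset.sum_congr rfl fun k _ => by ring
          _ = ((|a i'| * Nrm i') * ∑ k, |ab k| * (|wb k| + |bb k|)) * (Np g ξ + Nm g ξ) := by
              rw [← Finset.sum_mul, ← Finset.mul_sum]
          _ = |a i'| * Nrm i' * γb * (Np g ξ + Nm g ξ) := by rw [← hγb]
      linarith [t1, t2]
    -- sum rearrangement of the class member
    have f1 : ∑ i, sg ξ i * ((m:ℝ)⁻¹ * ∑ i', a i' *
          ((Fintype.card G : ℝ)⁻¹ * ∑ g : G, σ (U i' g i)))
        = (m:ℝ)⁻¹ * ∑ i', (Fintype.card G : ℝ)⁻¹ *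
            ∑ g : G, (a i' * ∑ i, sg ξ i * σ (U i' g i)) := by
      calc ∑ i, sg ξ i * ((m:ℝ)⁻¹ * ∑ i', a i' *
            ((Fintype.card G : ℝ)⁻¹ * ∑ g : G, σ (U i' g i)))
          = ∑ i, ∑ i', ∑ g : G,
              sg ξ i * ((m:ℝ)⁻¹ * (a i' * ((Fintype.card G : ℝ)⁻¹ * σ (U i' g i)))) :=
            Finset.sum_congr rfl fun i _ => by simp only [Finset.mul_sum]
        _ = ∑ i', ∑ i, ∑ g : G,
              sg ξ i * ((m:ℝ)⁻¹ * (a i' * ((Fintype.card G : ℝ)⁻¹ * σ (U i' g i)))) :=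
            Finset.sum_comm
        _ = ∑ i', ∑ g : G, ∑ i,
              sg ξ i * ((m:ℝ)⁻¹ * (a i' * ((Fintype.card G : ℝ)⁻¹ * σ (U i' g i)))) :=
            Finset.sum_congr rfl fun i' _ => Finset.sum_comm
        _ = ∑ i', ∑ g : G, ∑ i,
              (m:ℝ)⁻¹ * ((Fintype.card G : ℝ)⁻¹ * (a i' * (sg ξ i * σ (U i' g i)))) :=
            Finset.sum_congr rfl fun i' _ => Finset.sum_congr rfl fun g _ =>
              Finset.sum_congr rfl fun i _ => by ring
        _ = (m:ℝ)⁻¹ * ∑ i', (Fintype.card G : ℝ)⁻¹ *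
              ∑ g : G, (a i' * ∑ i, sg ξ i * σ (U i' g i)) := by
            simp only [Finset.mul_sum]
    -- averages à la Cauchy-Schwarz
    have havg1 : (m:ℝ)⁻¹ * ∑ i', |a i'| * Nrm i' ≤ Q := by
      refine avg_le hm _ (fun i' => mul_nonneg (abs_nonneg _)
        (le_trans zero_le_one (hNrm1 i'))) hQ ?_
      exact hnorm
    have havg0 : (m:ℝ)⁻¹ * ∑ i', |a i'| ≤ Q := by
      refine le_trans ?_ havg1
      refine mul_le_mul_of_nonneg_left (Finset.sum_le_sum fun i' _ => ?_) (by positivity)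
      exact le_mul_of_one_le_right (abs_nonneg _) (hNrm1 i')
    -- middle factorization
    have hmid : (m:ℝ)⁻¹ * ∑ i', (Fintype.card G : ℝ)⁻¹ *
          ∑ g : G, (|a i'| * (M * ε') + |a i'| * Nrm i' * γb * (Np g ξ + Nm g ξ))
        = ((m:ℝ)⁻¹ * ∑ i', |a i'|) * (M * ε') +
          ((m:ℝ)⁻¹ * ∑ i', |a i'| * Nrm i') * γb *
            ((Fintype.card G : ℝ)⁻¹ * ∑ g : G, (Np g ξ + Nm g ξ)) := by
      have per : ∀ i', (Fintype.card G : ℝ)⁻¹ *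
            ∑ g : G, (|a i'| * (M * ε') + |a i'| * Nrm i' * γb * (Np g ξ + Nm g ξ))
          = |a i'| * (M * ε') + |a i'| * Nrm i' * γb *
              ((Fintype.card G : ℝ)⁻¹ * ∑ g : G, (Np g ξ + Nm g ξ)) := by
        intro i'
        rw [Finset.sum_add_distrib, Finset.sum_const, ← Finset.mul_sum, mul_add,
          nsmul_eq_mul, Finset.card_univ]
        congr 1
        · rw [← mul_assoc, inv_mul_cancel₀ (ne_of_gt hcGpos), one_mul]
        · ring
      rw [Finset.sum_congr rfl fun i' _ => per i', Finset.sum_add_distrib, mul_add]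
      congr 1
      · rw [← Finset.sum_mul, ← mul_assoc]
      · rw [← Finset.sum_mul, ← Finset.sum_mul]
        ring
    -- the epsilon bound
    have heps : Q * (M * ε') ≤ ε := by
      rw [hε']
      have e : (M:ℝ) * (ε / (M * (Q + 1))) = ε / (Q + 1) := by
        field_simp
      rw [e]
      rw [mul_div_assoc'] at *
      rw [div_le_iff₀ (by linarith : (0:ℝ) < Q + 1)]
      nlinarith [hε.le, hQ]
    -- put everything together
    calc ∑ i, sg ξ i * ((m:ℝ)⁻¹ * ∑ i', a i' *
          ((Fintype.card G : ℝ)⁻¹ * ∑ g : G, σ (U i' g i)))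
        = (m:ℝ)⁻¹ * ∑ i', (Fintype.card G : ℝ)⁻¹ *
            ∑ g : G, (a i' * ∑ i, sg ξ i * σ (U i' g i)) := f1
      _ ≤ (m:ℝ)⁻¹ * ∑ i', (Fintype.card G : ℝ)⁻¹ *
            ∑ g : G, (|a i'| * (M * ε') + |a i'| * Nrm i' * γb * (Np g ξ + Nm g ξ)) := by
          refine mul_le_mul_of_nonneg_left (Finset.sum_le_sum fun i' _ => ?_) (by positivity)
          exact mul_le_mul_of_nonneg_left (Finset.sum_le_sum fun g _ => hdecomp i' g)
            (by positivity)
      _ = ((m:ℝ)⁻¹ * ∑ i', |a i'|) * (M * ε') +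
          ((m:ℝ)⁻¹ * ∑ i', |a i'| * Nrm i') * γb *
            ((Fintype.card G : ℝ)⁻¹ * ∑ g : G, (Np g ξ + Nm g ξ)) := hmid
      _ ≤ Q * (M * ε') + Q * γ *
            ((Fintype.card G : ℝ)⁻¹ * ∑ g : G, (Np g ξ + Nm g ξ)) := by
          refine add_le_add ?_ ?_
          · exact mul_le_mul_of_nonneg_right havg0 (by positivity)
          · refine mul_le_mul_of_nonneg_right ?_ hAvgDnn
            exact mul_le_mul havg1 hγs hγbnn hQ
      _ ≤ γ * Q * ((Fintype.card G : ℝ)⁻¹ * ∑ g : G, (Np g ξ + Nm g ξ)) + ε := by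
          have : Q * γ = γ * Q := mul_comm Q γ
          linarith [heps]
  -- assemble the final bound
  have neuron : ∀ g : G, (2 ^ M : ℝ)⁻¹ * ∑ ξ : Fin M → Bool, (Np g ξ + Nm g ξ) ≤
      4 * Real.sqrt (M * Real.log (2 * d + 2)) := by
    intro g
    exact neuron_bound hM (fun i => g • x i) (hyb g)
  have main2 : (2 ^ M : ℝ)⁻¹ * ∑ ξ : Fin M → Bool,
      sSup ((fun f : (Fin d → ℝ) → ℝ => ∑ i, sg ξ i * f (x i)) '' sigmaClassG G σ Q) ≤
      γ * Q * (4 * Real.sqrt (M * Real.log (2 * d + 2))) := by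
    calc (2 ^ M : ℝ)⁻¹ * ∑ ξ : Fin M → Bool,
          sSup ((fun f : (Fin d → ℝ) → ℝ => ∑ i, sg ξ i * f (x i)) '' sigmaClassG G σ Q)
        ≤ (2 ^ M : ℝ)⁻¹ * ∑ ξ : Fin M → Bool,
            γ * Q * ((Fintype.card G : ℝ)⁻¹ * ∑ g : G, (Np g ξ + Nm g ξ)) := by
          refine mul_le_mul_of_nonneg_left (Finset.sum_le_sum fun ξ _ => stepA ξ)
            (by positivity)
      _ = γ * Q * ((Fintype.card G : ℝ)⁻¹ *
            ∑ g : G, ((2 ^ M : ℝ)⁻¹ * ∑ ξ : Fin M → Bool, (Np g ξ + Nm g ξ))) := by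
          rw [show ∑ ξ : Fin M → Bool,
              γ * Q * ((Fintype.card G : ℝ)⁻¹ * ∑ g : G, (Np g ξ + Nm g ξ)) =
              γ * Q * (Fintype.card G : ℝ)⁻¹ *
                ∑ ξ : Fin M → Bool, ∑ g : G, (Np g ξ + Nm g ξ) from by
            rw [Finset.mul_sum]
            exact Finset.sum_congr rfl fun ξ _ => by ring]
          rw [show ∑ g : G, ((2 ^ M : ℝ)⁻¹ * ∑ ξ : Fin M → Bool, (Np g ξ + Nm g ξ)) =
              (2 ^ M : ℝ)⁻¹ * ∑ g : G, ∑ ξ : Fin M → Bool, (Np g ξ + Nm g ξ) from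
            (Finset.mul_sum _ _ _).symm]
          rw [show (∑ g : G, ∑ ξ : Fin M → Bool, (Np g ξ + Nm g ξ)) =
              ∑ ξ : Fin M → Bool, ∑ g : G, (Np g ξ + Nm g ξ) from Finset.sum_comm]
          ring
      _ ≤ γ * Q * ((Fintype.card G : ℝ)⁻¹ *
            ∑ _g : G, 4 * Real.sqrt (M * Real.log (2 * d + 2))) := by
          refine mul_le_mul_of_nonneg_left ?_ (by positivity)
          refine mul_le_mul_of_nonneg_left (Finset.sum_le_sum fun g _ => neuron g)
            (by positivity)
      _ = γ * Q * (4 * Real.sqrt (M * Real.log (2 * d + 2))) := by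
          rw [Finset.sum_const, Finset.card_univ, nsmul_eq_mul,
            ← mul_assoc ((Fintype.card G : ℝ))⁻¹ ((Fintype.card G : ℝ)),
            inv_mul_cancel₀ (ne_of_gt hcGpos), one_mul]
  -- final arithmetic with the square root
  have hlognn : 0 ≤ Real.log (2 * (d:ℝ) + 2) := by
    refine Real.log_nonneg ?_
    have : (0:ℝ) ≤ (d:ℝ) := Nat.cast_nonneg d
    linarith
  have sqrt_eq : Real.sqrt (Real.log (2 * (d:ℝ) + 2) / M) =
      Real.sqrt ((M:ℝ) * Real.log (2 * (d:ℝ) + 2)) / M := by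
    rw [show Real.log (2 * (d:ℝ) + 2) / M = ((M:ℝ) * Real.log (2 * (d:ℝ) + 2)) / (M:ℝ)^2 by
      field_simp]
    rw [Real.sqrt_div (by positivity), Real.sqrt_sq hMR.le]
  show (M : ℝ)⁻¹ * ((2 ^ M : ℝ)⁻¹ * ∑ ξ : Fin M → Bool,
      sSup ((fun f : (Fin d → ℝ) → ℝ =>
        ∑ i, (if ξ i then (1:ℝ) else -1) * f (x i)) '' sigmaClassG G σ Q)) ≤ _
  simp only [sg_def]
  calc (M : ℝ)⁻¹ * ((2 ^ M : ℝ)⁻¹ * ∑ ξ : Fin M → Bool,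
        sSup ((fun f : (Fin d → ℝ) → ℝ => ∑ i, sg ξ i * f (x i)) '' sigmaClassG G σ Q))
      ≤ (M : ℝ)⁻¹ * (γ * Q * (4 * Real.sqrt (M * Real.log (2 * d + 2)))) :=
        mul_le_mul_of_nonneg_left main2 (by positivity)
    _ = 4 * γ * Q * (Real.sqrt (M * Real.log (2 * d + 2)) / M) := by
        field_simp
    _ = 4 * γ * Q * Real.sqrt (Real.log (2 * d + 2) / M) := by
        rw [sqrt_eq]
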